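/- The hyperbinary sequence H, counting the number of ways to write n as a sum of powers of 2 where each power is used at most twice, satisfies H(0) = 1, H(2n+1) = H(n), and H(2n+2) = H(n) + H(n+1) for all n ≥ 0. -/

import Mathlib

open Finsupp

def succEmb : ℕ ↪ ℕ := ⟨Nat.succ, Nat.succ_injective⟩

noncomputable def shiftUp (a : ℕ) (c : ℕ →₀ ℕ) : ℕ →₀ ℕ :=
  Finsupp.single 0 a + c.embDomain succEmb

noncomputable def shiftDown (c : ℕ →₀ ℕ) : ℕ →₀ ℕ :=
  Finsupp.comapDomain Nat.succ c (Nat.succ_injective.injOn)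

lemma shiftUp_zero (a : ℕ) (c : ℕ →₀ ℕ) : shiftUp a c 0 = a := by
  simp [shiftUp, Finsupp.embDomain_notin_range, succEmb]

lemma shiftUp_succ (a : ℕ) (c : ℕ →₀ ℕ) (k : ℕ) : shiftUp a c (k + 1) = c k := by
  have : c.embDomain succEmb (succEmb k) = c k := Finsupp.embDomain_apply_self _ _ _
  simpa [shiftUp, succEmb, Finsupp.single_apply] using this

lemma shiftDown_apply (c : ℕ →₀ ℕ) (k : ℕ) : shiftDown c k = c (k + 1) := rfl

lemma shiftDown_shiftUp (a : ℕ) (c : ℕ →₀ ℕ) : shiftDown (shiftUp a c) = c := by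
  ext k; rw [shiftDown_apply, shiftUp_succ]

lemma shiftUp_shiftDown (c : ℕ →₀ ℕ) : shiftUp (c 0) (shiftDown c) = c := by
  ext k
  cases k with
  | zero => rw [shiftUp_zero]
  | succ k => rw [shiftUp_succ, shiftDown_apply]

lemma shiftUp_sum (a : ℕ) (c : ℕ →₀ ℕ) :
    (shiftUp a c).sum (fun k m => m * 2 ^ k) = a + 2 * c.sum (fun k m => m * 2 ^ k) := by
  rw [shiftUp, Finsupp.sum_add_index' (fun k => zero_mul ((2:ℕ) ^ k))
    (fun k a b => add_mul a b ((2:ℕ) ^ k)),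
    Finsupp.sum_single_index (h := fun k m => m * 2 ^ k) (by simp), Finsupp.sum_embDomain]
  simp only [succEmb, Function.Embedding.coeFn_mk, pow_zero, mul_one]
  congr 1
  rw [Finsupp.sum, Finsupp.sum, Finset.mul_sum]
  exact Finset.sum_congr rfl fun k _ => by rw [pow_succ]; ring

lemma sum_decomp (c : ℕ →₀ ℕ) :
    c.sum (fun k m => m * 2 ^ k) = c 0 + 2 * (shiftDown c).sum (fun k m => m * 2 ^ k) := by
  conv_lhs => rw [← shiftUp_shiftDown c]
  rw [shiftUp_sum]

lemma term_le {c : ℕ →₀ ℕ} {n : ℕ} (hs : c.sum (fun k m => m * 2 ^ k) = n) (k : ℕ) :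
    c k * 2 ^ k ≤ n := by
  by_cases hk : k ∈ c.support
  · calc c k * 2 ^ k ≤ ∑ j ∈ c.support, c j * 2 ^ j :=
        Finset.single_le_sum (f := fun j => c j * 2 ^ j) (fun j _ => Nat.zero_le _) hk
      _ = n := hs
  · simp [Finsupp.notMem_support_iff.mp hk]

lemma repFinite (n : ℕ) :
    Finite {c : ℕ →₀ ℕ // (∀ k, c k ≤ 2) ∧ c.sum (fun k a => a * 2 ^ k) = n} := by
  have hzero : ∀ (c : {c : ℕ →₀ ℕ // (∀ k, c k ≤ 2) ∧ c.sum (fun k a => a * 2 ^ k) = n})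
      (k : ℕ), n < k → c.1 k = 0 := by
    intro c k hk
    by_contra h
    have h1 : 1 ≤ c.1 k := Nat.one_le_iff_ne_zero.mpr h
    have := term_le c.2.2 k
    have h2 : 2 ^ k ≤ n := le_trans (by
      calc 2 ^ k = 1 * 2 ^ k := (one_mul _).symm
        _ ≤ c.1 k * 2 ^ k := Nat.mul_le_mul_right _ h1) this
    have := Nat.lt_two_pow_self (n := k)
    omega
  have : Function.Injective
      (fun (c : {c : ℕ →₀ ℕ // (∀ k, c k ≤ 2) ∧ c.sum (fun k a => a * 2 ^ k) = n}) =>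
        (fun k : Fin (n + 1) => (⟨c.1 k, by have := c.2.1 k; omega⟩ : Fin 3))) := by
    intro c d h
    ext1; ext k
    rcases le_or_gt k n with hk | hk
    · exact congrArg Fin.val (congrFun h ⟨k, by omega⟩)
    · rw [hzero c k hk, hzero d k hk]
  exact Finite.of_injective _ this

noncomputable def oddEquiv (n : ℕ) :
    {c : ℕ →₀ ℕ // (∀ k, c k ≤ 2) ∧ c.sum (fun k a => a * 2 ^ k) = 2 * n + 1} ≃
    {c : ℕ →₀ ℕ // (∀ k, c k ≤ 2) ∧ c.sum (fun k a => a * 2 ^ k) = n} where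
  toFun c := ⟨shiftDown c.1, fun k => by rw [shiftDown_apply]; exact c.2.1 _, by
    have h := sum_decomp c.1
    have h0 := c.2.1 0
    rw [c.2.2] at h
    omega⟩
  invFun c := ⟨shiftUp 1 c.1, fun k => by
      cases k with
      | zero => rw [shiftUp_zero]; omega
      | succ k => rw [shiftUp_succ]; exact c.2.1 _,
    by rw [shiftUp_sum, c.2.2]; ring⟩
  left_inv c := by
    apply Subtype.ext
    have h := sum_decomp c.1
    have h0 := c.2.1 0
    rw [c.2.2] at h
    have h1 : c.1 0 = 1 := by omega
    show shiftUp 1 (shiftDown c.1) = c.1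
    calc shiftUp 1 (shiftDown c.1) = shiftUp (c.1 0) (shiftDown c.1) := by rw [h1]
      _ = c.1 := shiftUp_shiftDown c.1
  right_inv c := Subtype.ext (shiftDown_shiftUp _ _)

noncomputable def evenEquiv (n : ℕ) :
    {c : ℕ →₀ ℕ // (∀ k, c k ≤ 2) ∧ c.sum (fun k a => a * 2 ^ k) = 2 * n + 2} ≃
    ({c : ℕ →₀ ℕ // (∀ k, c k ≤ 2) ∧ c.sum (fun k a => a * 2 ^ k) = n} ⊕
     {c : ℕ →₀ ℕ // (∀ k, c k ≤ 2) ∧ c.sum (fun k a => a * 2 ^ k) = n + 1}) where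
  toFun c :=
    if h : c.1 0 = 2 then
      Sum.inl ⟨shiftDown c.1, fun k => by rw [shiftDown_apply]; exact c.2.1 _, by
        have hd := sum_decomp c.1
        rw [c.2.2] at hd
        omega⟩
    else
      Sum.inr ⟨shiftDown c.1, fun k => by rw [shiftDown_apply]; exact c.2.1 _, by
        have hd := sum_decomp c.1
        have h0 := c.2.1 0
        rw [c.2.2] at hd
        omega⟩
  invFun c :=
    match c with
    | Sum.inl c => ⟨shiftUp 2 c.1, fun k => by
        cases k with
        | zero => rw [shiftUp_zero]
        | succ k => rw [shiftUp_succ]; exact c.2.1 _,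
      by rw [shiftUp_sum, c.2.2]; ring⟩
    | Sum.inr c => ⟨shiftUp 0 c.1, fun k => by
        cases k with
        | zero => rw [shiftUp_zero]; omega
        | succ k => rw [shiftUp_succ]; exact c.2.1 _,
      by rw [shiftUp_sum, c.2.2]; omega⟩
  left_inv c := by
    by_cases h : c.1 0 = 2
    · beta_reduce
      rw [dif_pos h]
      apply Subtype.ext
      show shiftUp 2 (shiftDown c.1) = c.1
      calc shiftUp 2 (shiftDown c.1) = shiftUp (c.1 0) (shiftDown c.1) := by rw [h]
        _ = c.1 := shiftUp_shiftDown c.1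
    · beta_reduce
      rw [dif_neg h]
      apply Subtype.ext
      have hd := sum_decomp c.1
      have h0 := c.2.1 0
      rw [c.2.2] at hd
      have h0' : c.1 0 = 0 := by omega
      show shiftUp 0 (shiftDown c.1) = c.1
      calc shiftUp 0 (shiftDown c.1) = shiftUp (c.1 0) (shiftDown c.1) := by rw [h0']
        _ = c.1 := shiftUp_shiftDown c.1
  right_inv c := by
    match c with
    | Sum.inl c =>
      have h : (shiftUp 2 c.1) 0 = 2 := shiftUp_zero _ _
      beta_reduce
      rw [dif_pos h]
      exact congrArg Sum.inl (Subtype.ext (shiftDown_shiftUp _ _))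
    | Sum.inr c =>
      have h2 : ¬ (shiftUp 0 c.1) 0 = 2 := by rw [shiftUp_zero]; omega
      beta_reduce
      rw [dif_neg h2]
      exact congrArg Sum.inr (Subtype.ext (shiftDown_shiftUp _ _))

/-- `hyperbinary n` counts the representations of `n` as a sum of powers of two in which
each power `2^k` is used at most twice: a representation is a finitely supported
multiplicity function `c : ℕ →₀ ℕ` with `c k ≤ 2` for all `k` and `∑ k, c k * 2^k = n`. -/
noncomputable def hyperbinary (n : ℕ) : ℕ :=
  Nat.card {c : ℕ →₀ ℕ // (∀ k, c k ≤ 2) ∧ c.sum (fun k a => a * 2 ^ k) = n}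

instance uniqueZero :
    Unique {c : ℕ →₀ ℕ // (∀ k, c k ≤ 2) ∧ c.sum (fun k a => a * 2 ^ k) = 0} where
  default := ⟨0, fun k => by simp, by simp⟩
  uniq c := by
    apply Subtype.ext
    ext k
    have := term_le c.2.2 k
    have : c.1 k = 0 := by
      have h2 : 0 < 2 ^ k := Nat.pow_pos (by norm_num)
      nlinarith
    simp [this]

theorem hyperbinary_recurrence :
    hyperbinary 0 = 1 ∧
    (∀ n : ℕ, hyperbinary (2 * n + 1) = hyperbinary n) ∧
    (∀ n : ℕ, hyperbinary (2 * n + 2) = hyperbinary n + hyperbinary (n + 1)) := by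
  refine ⟨?_, ?_, ?_⟩
  · exact Nat.card_unique
  · intro n
    exact Nat.card_congr (oddEquiv n)
  · intro n
    haveI := repFinite n
    haveI := repFinite (n + 1)
    rw [hyperbinary, hyperbinary, hyperbinary, Nat.card_congr (evenEquiv n), Nat.card_sum]
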